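/- Let h > 0, U(X) = −2·sech²(X), X_h(v) = arcsinh(√((2+h)/h)·sinh(v√h/2)) and Z_h(v) = 8·X_h′(v). Then for every real v one has Z_h(v)²/16 + U(X_h(v)) = h, i.e. the curve v ↦ (X_h(v), Z_h(v)) lies in the level set H_p = h of H_p(X,Z) = Z²/16 + U(X). -/

import Mathlib

open Real

/-- For `h > 0`, the curve `v ↦ (X_h(v), Z_h(v))` with
`X_h(v) = arcsinh(√((2+h)/h)·sinh(v√h/2))` and `Z_h = 8 X_h'` lies in the level set
`H_p = h` of the pendulum Hamiltonian `H_p(X,Z) = Z²/16 − 2 sech²(X)`. -/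
theorem heteroclinic_energy_h (h : ℝ) (hh : 0 < h) (v : ℝ) :
    (8 * deriv (fun w => Real.arsinh
        (Real.sqrt ((2 + h) / h) * Real.sinh (w * Real.sqrt h / 2))) v) ^ 2 / 16
      + (-2 * (1 / Real.cosh (Real.arsinh
        (Real.sqrt ((2 + h) / h) * Real.sinh (v * Real.sqrt h / 2)))) ^ 2) = h := by
  set c := Real.sqrt ((2 + h) / h) with hc
  set s := Real.sqrt h with hs
  set a := v * s / 2 with ha
  have hinner : HasDerivAt (fun w : ℝ => c * Real.sinh (w * s / 2))
      (c * (Real.cosh a * (s / 2))) v := by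
    have h1 : HasDerivAt (fun w : ℝ => w * s / 2) (s / 2) v := by
      simpa using ((hasDerivAt_id v).mul_const s).div_const 2
    exact ((Real.hasDerivAt_sinh a).comp v h1).const_mul c
  have hD : HasDerivAt (fun w : ℝ => Real.arsinh (c * Real.sinh (w * s / 2)))
      ((Real.sqrt (1 + (c * Real.sinh a) ^ 2))⁻¹ * (c * (Real.cosh a * (s / 2)))) v :=
    (Real.hasDerivAt_arsinh _).comp v hinner
  rw [hD.deriv, Real.cosh_arsinh]
  have hs2 : s ^ 2 = h := Real.sq_sqrt hh.le
  have hc2 : c ^ 2 = (2 + h) / h := Real.sq_sqrt (by positivity)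
  have hcosh2 : Real.cosh a ^ 2 = 1 + Real.sinh a ^ 2 := by
    have := Real.cosh_sq_sub_sinh_sq a; nlinarith
  have hDpos : 0 < 1 + (c * Real.sinh a) ^ 2 := by positivity
  have hsq : Real.sqrt (1 + (c * Real.sinh a) ^ 2) ^ 2 = 1 + (c * Real.sinh a) ^ 2 :=
    Real.sq_sqrt hDpos.le
  have hsqpos : 0 < Real.sqrt (1 + (c * Real.sinh a) ^ 2) := Real.sqrt_pos.mpr hDpos
  have hhne : h ≠ 0 := hh.ne'
  have hc2' : c ^ 2 * h = 2 + h := by rw [hc2]; field_simp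
  field_simp
  simp only [mul_pow] at hsq ⊢
  linear_combination (-64*h) * hsq
    + (64*c^2*s^2) * hcosh2
    + (64*c^2*(1+Real.sinh a^2)) * hs2
    + 64 * hc2'
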